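/- Fix integers M, N, N' with M - N > 2 and a real number x > 1. Define g(q) = q^{x(M-N-2) - kM/6} · ((1-q)/(1-q^x))^{M-N+1} for a fixed positive integer k < x. Then for q in (1/2, 1), g is increasing in q, and consequently g(q) ≤ lim_{q→1⁻} g(q) = 1/x^{M-N+1}, provided M > 16 + 2N (so that M/2 - N - 8 > 0). -/

import Mathlib

open Real Set Filter

lemma chi_nonneg (x : ℝ) (hx : 1 < x) {q : ℝ} (hq0 : 0 < q) (hq1 : q ≤ 1) :
    0 ≤ (x-1) * q^x - x * q^(x-1) + 1 := by
  set f : ℝ → ℝ := fun t => (x-1) * t^x - x * t^(x-1) + 1 with hf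
  have hder : ∀ t ∈ Ioo q 1, HasDerivAt f (x*(x-1)*t^(x-1) - x*(x-1)*t^(x-2)) t := by
    intro t ht
    have ht0 : t ≠ 0 := ne_of_gt (lt_trans hq0 ht.1)
    have h1 : HasDerivAt (fun s : ℝ => s ^ x) (x * t^(x-1)) t :=
      Real.hasDerivAt_rpow_const (Or.inl ht0)
    have h2 : HasDerivAt (fun s : ℝ => s ^ (x-1)) ((x-1) * t^(x-1-1)) t :=
      Real.hasDerivAt_rpow_const (Or.inl ht0)
    have := ((h1.const_mul (x-1)).sub (h2.const_mul x)).add_const 1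
    refine this.congr_deriv ?_
    rw [show x - 1 - 1 = x - 2 by ring]; ring
  have hcont : ContinuousOn f (Icc q 1) := by
    intro t ht
    have ht0 : t ≠ 0 := ne_of_gt (lt_of_lt_of_le hq0 ht.1)
    exact (((Real.continuousAt_rpow_const t x (Or.inl ht0)).const_smul (x-1)).sub
      ((Real.continuousAt_rpow_const t (x-1) (Or.inl ht0)).const_smul x)).add
      continuousAt_const |>.continuousWithinAt
  have hanti : AntitoneOn f (Icc q 1) := by
    apply antitoneOn_of_deriv_nonpos (convex_Icc q 1) hcont
    · rw [interior_Icc]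
      exact fun t ht => ((hder t ht).differentiableAt).differentiableWithinAt
    · rw [interior_Icc]
      intro t ht
      rw [(hder t ht).deriv]
      have ht0 : 0 < t := lt_trans hq0 ht.1
      have : t ^ (x-1) ≤ t ^ (x-2) :=
        Real.rpow_le_rpow_of_exponent_ge ht0 (le_of_lt ht.2) (by linarith)
      nlinarith [mul_nonneg (mul_nonneg (le_of_lt (lt_trans one_pos hx)) (by linarith : (0:ℝ) ≤ x - 1)) (sub_nonneg.2 this)]
  have h1 : f 1 = 0 := by simp [hf]
  rcases eq_or_lt_of_le hq1 with h | h
  · subst h; rw [← h1]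
  · have := hanti (left_mem_Icc.2 hq1) (right_mem_Icc.2 hq1) hq1
    rw [h1] at this
    exact this

lemma psi_nonneg (x : ℝ) (hx : 1 < x) {q : ℝ} (hq0 : 0 < q) (hq1 : q ≤ 1) :
    (x+1) * (q - q^x) ≤ (x-1) * (1 - q^(x+1)) := by
  set f : ℝ → ℝ := fun t => (x-1) * (1 - t^(x+1)) - (x+1) * (t - t^x) with hf
  have hder : ∀ t ∈ Ioo q 1, HasDerivAt f
      (-(x+1) * ((x-1) * t^x - x * t^(x-1) + 1)) t := by
    intro t ht
    have ht0 : t ≠ 0 := ne_of_gt (lt_trans hq0 ht.1)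
    have h1 : HasDerivAt (fun s : ℝ => s ^ (x+1)) ((x+1) * t^(x+1-1)) t :=
      Real.hasDerivAt_rpow_const (Or.inl ht0)
    have h2 : HasDerivAt (fun s : ℝ => s ^ x) (x * t^(x-1)) t :=
      Real.hasDerivAt_rpow_const (Or.inl ht0)
    have := ((h1.const_sub 1).const_mul (x-1)).sub
      (((hasDerivAt_id t).sub h2).const_mul (x+1))
    refine this.congr_deriv ?_
    rw [show x + 1 - 1 = x by ring]; ring
  have hcont : ContinuousOn f (Icc q 1) := by
    intro t ht
    have ht0 : t ≠ 0 := ne_of_gt (lt_of_lt_of_le hq0 ht.1)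
    exact (((continuousAt_const.sub (Real.continuousAt_rpow_const t (x+1) (Or.inl ht0))).const_smul (x-1)).sub
      ((continuousAt_id.sub (Real.continuousAt_rpow_const t x (Or.inl ht0))).const_smul (x+1))).continuousWithinAt
  have hanti : AntitoneOn f (Icc q 1) := by
    apply antitoneOn_of_deriv_nonpos (convex_Icc q 1) hcont
    · rw [interior_Icc]
      exact fun t ht => ((hder t ht).differentiableAt).differentiableWithinAt
    · rw [interior_Icc]
      intro t ht
      rw [(hder t ht).deriv]
      have := chi_nonneg x hx (lt_trans hq0 ht.1) (le_of_lt ht.2)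
      nlinarith
  have h1 : f 1 = 0 := by simp [hf]
  rcases eq_or_lt_of_le hq1 with h | h
  · subst h; simp
  · have := hanti (left_mem_Icc.2 hq1) (right_mem_Icc.2 hq1) hq1
    rw [h1] at this
    simp only [hf] at this
    linarith
open Real Set Filter

theorem stmt_5 (M N : ℕ) (hMN : 16 + 2 * N < M) (x : ℝ) (hx : 1 < x)
    (k : ℕ) (hk : 0 < k) (hkx : (k : ℝ) < x)
    (g : ℝ → ℝ)
    (hg : g = fun q => q ^ (x * ((M : ℝ) - N - 2) - k * M / 6) *
        ((1 - q) / (1 - q ^ x)) ^ ((M : ℝ) - N + 1)) :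
    MonotoneOn g (Ioo (1/2 : ℝ) 1) ∧
    (∀ q ∈ Ioo (1/2 : ℝ) 1, g q ≤ 1 / x ^ ((M : ℝ) - N + 1)) ∧
    Filter.Tendsto g (nhdsWithin 1 (Iio (1 : ℝ)))
      (nhds (1 / x ^ ((M : ℝ) - N + 1))) := by
  subst hg
  set a : ℝ := x * ((M : ℝ) - N - 2) - k * M / 6 with ha
  set b : ℝ := (M : ℝ) - N + 1 with hb
  have hx0 : (0:ℝ) < x := lt_trans one_pos hx
  have hM : (17:ℝ) + 2 * N ≤ M := by
    have : 17 + 2 * N ≤ M := by omega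
    exact_mod_cast this
  have hN0 : (0:ℝ) ≤ N := Nat.cast_nonneg N
  have hM0 : (0:ℝ) ≤ M := Nat.cast_nonneg M
  have hb0 : (0:ℝ) < b := by rw [hb]; linarith
  have hab : b * (x - 1) / 2 ≤ a := by
    rw [ha, hb]
    nlinarith [mul_le_mul_of_nonneg_right (le_of_lt hkx) hM0,
      mul_nonneg (le_of_lt hx0) (show (0:ℝ) ≤ (M:ℝ)/3 - N/2 - 5/2 by linarith)]
  -- derivative at each point of (1/2, 1)
  have hderiv : ∀ q ∈ Ioo (1/2 : ℝ) 1,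
      HasDerivAt (fun q : ℝ => q ^ a * ((1 - q) / (1 - q ^ x)) ^ b)
        (a * q ^ (a-1) * ((1 - q) / (1 - q ^ x)) ^ b
          + q ^ a * (b * ((1 - q) / (1 - q ^ x)) ^ (b-1) *
            (((-1) * (1 - q ^ x) - (1 - q) * (-(x * q ^ (x-1)))) / (1 - q ^ x) ^ 2))) q := by
    intro q hq
    have hq0 : (0:ℝ) < q := lt_trans (by norm_num) hq.1
    have hq1 : q < 1 := hq.2
    have hw : (0:ℝ) < 1 - q ^ x := by
      have : q ^ x < 1 := Real.rpow_lt_one (le_of_lt hq0) hq1 hx0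
      linarith
    have hu : (0:ℝ) < (1 - q) / (1 - q ^ x) := div_pos (by linarith) hw
    have h1 : HasDerivAt (fun t : ℝ => t ^ a) (a * q ^ (a-1)) q :=
      Real.hasDerivAt_rpow_const (Or.inl (ne_of_gt hq0))
    have h2 : HasDerivAt (fun t : ℝ => 1 - t) (-1) q := (hasDerivAt_id q).const_sub 1
    have h3 : HasDerivAt (fun t : ℝ => 1 - t ^ x) (-(x * q ^ (x-1))) q :=
      (Real.hasDerivAt_rpow_const (Or.inl (ne_of_gt hq0))).const_sub 1
    have h4 := h2.div h3 (ne_of_gt hw)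
    have h5 := h4.rpow_const (p := b) (Or.inl (ne_of_gt hu))
    have := h1.mul h5
    refine this.congr_deriv ?_
    simp only [Pi.div_apply]
    ring
  -- nonnegativity of the derivative
  have hnonneg : ∀ q ∈ Ioo (1/2 : ℝ) 1,
      0 ≤ a * q ^ (a-1) * ((1 - q) / (1 - q ^ x)) ^ b
          + q ^ a * (b * ((1 - q) / (1 - q ^ x)) ^ (b-1) *
            (((-1) * (1 - q ^ x) - (1 - q) * (-(x * q ^ (x-1)))) / (1 - q ^ x) ^ 2)) := by
    intro q hq
    have hq0 : (0:ℝ) < q := lt_trans (by norm_num) hq.1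
    have hq1 : q < 1 := hq.2
    have hw : (0:ℝ) < 1 - q ^ x := by
      have : q ^ x < 1 := Real.rpow_lt_one (le_of_lt hq0) hq1 hx0
      linarith
    have hu : (0:ℝ) < (1 - q) / (1 - q ^ x) := div_pos (by linarith) hw
    have hqa : q ^ (a-1) * q = q ^ a := by
      rw [← Real.rpow_add_one (ne_of_gt hq0) (a-1)]; norm_num
    have hub : ((1 - q) / (1 - q ^ x)) ^ (b-1) * ((1 - q) / (1 - q ^ x))
        = ((1 - q) / (1 - q ^ x)) ^ b := by
      rw [← Real.rpow_add_one (ne_of_gt hu) (b-1)]; norm_num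
    have hqx : q ^ (x-1) * q = q ^ x := by
      rw [← Real.rpow_add_one (ne_of_gt hq0) (x-1)]; norm_num
    have hqx1 : q ^ (x+1) = q ^ x * q := Real.rpow_add_one (ne_of_gt hq0) x
    -- numerator nonnegativity
    have hψ := psi_nonneg x hx hq0 (le_of_lt hq1)
    rw [hqx1] at hψ
    have hNum : 0 ≤ a * (1-q) * (1 - q^x) - b * q * (1 - q^x) + b * x * (1-q) * q^x := by
      have h1 : 0 ≤ (a - b * (x-1)/2) * ((1-q) * (1 - q^x)) :=
        mul_nonneg (by linarith) (mul_nonneg (by linarith) (le_of_lt hw))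
      have h2 : 0 ≤ (b/2) * ((x-1) * (1 - q^x * q) - (x+1) * (q - q^x)) :=
        mul_nonneg (by linarith) (by linarith)
      have heq : a * (1-q) * (1 - q^x) - b * q * (1 - q^x) + b * x * (1-q) * q^x
          = (a - b * (x-1)/2) * ((1-q) * (1 - q^x))
            + (b/2) * ((x-1) * (1 - q^x * q) - (x+1) * (q - q^x)) := by ring
      rw [heq]; exact add_nonneg h1 h2
    -- combination equals numerator over square
    have key : a * ((1-q)/(1-q^x)) + b * q *
        (((-1) * (1 - q ^ x) - (1 - q) * (-(x * q ^ (x-1)))) / (1 - q ^ x) ^ 2)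
        = (a * (1-q) * (1 - q^x) - b * q * (1 - q^x) + b * x * (1-q) * q^x) / (1 - q^x)^2 := by
      have hqx' : q ^ (x-1) = q ^ x / q := by
        rw [eq_div_iff (ne_of_gt hq0), hqx]
      rw [hqx']
      field_simp
      ring
    have hfac : a * q ^ (a-1) * ((1 - q) / (1 - q ^ x)) ^ b
        + q ^ a * (b * ((1 - q) / (1 - q ^ x)) ^ (b-1) *
          (((-1) * (1 - q ^ x) - (1 - q) * (-(x * q ^ (x-1)))) / (1 - q ^ x) ^ 2))
        = q ^ (a-1) * ((1 - q) / (1 - q ^ x)) ^ (b-1) *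
          (a * ((1-q)/(1-q^x)) + b * q *
            (((-1) * (1 - q ^ x) - (1 - q) * (-(x * q ^ (x-1)))) / (1 - q ^ x) ^ 2)) := by
      rw [← hqa, ← hub]; ring
    rw [hfac, key]
    exact mul_nonneg (mul_nonneg (Real.rpow_pos_of_pos hq0 _).le
      (Real.rpow_pos_of_pos hu _).le) (div_nonneg hNum (by positivity))
  -- monotonicity
  have hmono : MonotoneOn (fun q : ℝ => q ^ a * ((1 - q) / (1 - q ^ x)) ^ b)
      (Ioo (1/2 : ℝ) 1) := by
    apply monotoneOn_of_deriv_nonneg (convex_Ioo _ _)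
    · exact fun q hq => (hderiv q hq).continuousAt.continuousWithinAt
    · rw [interior_Ioo]
      exact fun q hq => (hderiv q hq).differentiableAt.differentiableWithinAt
    · rw [interior_Ioo]
      intro q hq
      rw [(hderiv q hq).deriv]
      exact hnonneg q hq
  -- limit
  have hlim : Filter.Tendsto (fun q : ℝ => q ^ a * ((1 - q) / (1 - q ^ x)) ^ b)
      (nhdsWithin 1 (Iio (1:ℝ))) (nhds (1 / x ^ b)) := by
    have hd : HasDerivAt (fun t : ℝ => t ^ x) x 1 := by
      simpa using Real.hasDerivAt_rpow_const (x := (1:ℝ)) (p := x) (Or.inl one_ne_zero)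
    rw [hasDerivAt_iff_tendsto_slope] at hd
    have hd' : Filter.Tendsto (slope (fun t : ℝ => t ^ x) 1)
        (nhdsWithin 1 (Iio (1:ℝ))) (nhds x) :=
      hd.mono_left (nhdsWithin_mono 1 (fun y hy => ne_of_lt hy))
    have hinv := hd'.inv₀ (ne_of_gt hx0)
    have hslope : Filter.Tendsto (fun q : ℝ => (1 - q) / (1 - q ^ x))
        (nhdsWithin 1 (Iio (1:ℝ))) (nhds x⁻¹) := by
      refine hinv.congr fun q => ?_
      rw [slope_def_field, Real.one_rpow, inv_div,
        show (q:ℝ) - 1 = -(1 - q) by ring, show q ^ x - 1 = -(1 - q ^ x) by ring,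
        neg_div_neg_eq]
    have h1t : Filter.Tendsto (fun q : ℝ => q ^ a) (nhdsWithin 1 (Iio (1:ℝ))) (nhds 1) := by
      have hc : ContinuousAt (fun q : ℝ => q ^ a) 1 :=
        Real.continuousAt_rpow_const 1 a (Or.inl one_ne_zero)
      simpa [Real.one_rpow] using hc.tendsto.mono_left nhdsWithin_le_nhds
    have h2t := hslope.rpow_const (p := b) (Or.inl (inv_ne_zero (ne_of_gt hx0)))
    have hprod := h1t.mul h2t
    simpa [Real.inv_rpow hx0.le, one_div] using hprod
  refine ⟨hmono, fun q hq => ?_, hlim⟩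
  refine ge_of_tendsto hlim ?_
  filter_upwards [Ioo_mem_nhdsLT_of_mem (show (1:ℝ) ∈ Ioc q 1 from ⟨hq.2, le_refl 1⟩)]
    with t ht
  exact hmono hq ⟨lt_trans hq.1 ht.1, ht.2⟩ (le_of_lt ht.1)
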